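/- Let ρ̃ be the periodic extension of ρ to the cycle Z_{N−1} (ρ̃_k = ρ_{((k−1) mod (N−1))+1}), and define S̃_N = ∑_{d=1}^{N−1} ∑_{j=1}^{N−1} ∏_{k=j}^{j+d−1} ρ̃_k and S_N = ∑_{d=1}^{N−1} ∑_{j=1}^{N−d} ∏_{k=j}^{j+d−1} ρ_k. If 0 ≤ ρ_k ≤ α < 1 for all k, then 0 ≤ S̃_N − S_N ≤ ∑_{d=1}^{∞} d·α^d = α/(1−α)^2, a bound independent of N. -/

import Mathlib

open Finset

theorem circle_approximation (N : ℕ) (hN : 2 ≤ N) (α : ℝ) (hα0 : 0 < α) (hα1 : α < 1)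
    (ρ : ℕ → ℝ) (hρ : ∀ k, 1 ≤ k → k ≤ N - 1 → 0 ≤ ρ k ∧ ρ k ≤ α)
    (ρt : ℕ → ℝ) (hρt : ∀ k, ρt k = ρ ((k - 1) % (N - 1) + 1))
    (St S : ℝ)
    (hSt : St = ∑ d ∈ Finset.Icc 1 (N - 1), ∑ j ∈ Finset.Icc 1 (N - 1),
        ∏ k ∈ Finset.Icc j (j + d - 1), ρt k)
    (hS : S = ∑ d ∈ Finset.Icc 1 (N - 1), ∑ j ∈ Finset.Icc 1 (N - d),
        ∏ k ∈ Finset.Icc j (j + d - 1), ρ k) :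
    0 ≤ St - S ∧ St - S ≤ α / (1 - α) ^ 2 ∧
      ∑' d : ℕ, (d : ℝ) * α ^ d = α / (1 - α) ^ 2 := by
  have hM : 1 ≤ N - 1 := by omega
  have htsum : ∑' d : ℕ, (d : ℝ) * α ^ d = α / (1 - α) ^ 2 := by
    have : ‖α‖ < 1 := by rw [Real.norm_eq_abs, abs_of_pos hα0]; exact hα1
    exact tsum_coe_mul_geometric_of_norm_lt_one this
  have hsummable : Summable (fun d : ℕ => (d : ℝ) * α ^ d) := by
    have : ‖α‖ < 1 := by rw [Real.norm_eq_abs, abs_of_pos hα0]; exact hα1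
    exact (hasSum_coe_mul_geometric_of_norm_lt_one this).summable
  -- bounds for ρt
  have hρt' : ∀ k, 0 ≤ ρt k ∧ ρt k ≤ α := by
    intro k
    rw [hρt]
    apply hρ
    · omega
    · have := Nat.mod_lt (k - 1) (show 0 < N - 1 by omega)
      omega
  -- products agree when entirely inside [1, N-1]
  have hagree : ∀ d j : ℕ, 1 ≤ d → 1 ≤ j → j + d - 1 ≤ N - 1 →
      (∏ k ∈ Finset.Icc j (j + d - 1), ρ k) = ∏ k ∈ Finset.Icc j (j + d - 1), ρt k := by
    intro d j hd hj hjd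
    apply Finset.prod_congr rfl
    intro k hk
    simp only [Finset.mem_Icc] at hk
    rw [hρt, Nat.mod_eq_of_lt (by omega), show k - 1 + 1 = k by omega]
  have hprod_nonneg : ∀ d j : ℕ, 0 ≤ ∏ k ∈ Finset.Icc j (j + d - 1), ρt k :=
    fun d j => Finset.prod_nonneg fun k _ => (hρt' k).1
  have hprod_le : ∀ d j : ℕ, 1 ≤ d → (∏ k ∈ Finset.Icc j (j + d - 1), ρt k) ≤ α ^ d := by
    intro d j hd
    have hcard : (Finset.Icc j (j + d - 1)).card = d := by
      rw [Nat.card_Icc]; omega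
    calc (∏ k ∈ Finset.Icc j (j + d - 1), ρt k)
        ≤ ∏ k ∈ Finset.Icc j (j + d - 1), α :=
          Finset.prod_le_prod (fun k _ => (hρt' k).1) (fun k _ => (hρt' k).2)
      _ = α ^ d := by rw [Finset.prod_const, hcard]
  -- per-d difference
  have hdiff : St - S = ∑ d ∈ Finset.Icc 1 (N - 1),
      ∑ j ∈ Finset.Icc 1 (N - 1) \ Finset.Icc 1 (N - d),
        ∏ k ∈ Finset.Icc j (j + d - 1), ρt k := by
    rw [hSt, hS, ← Finset.sum_sub_distrib]
    apply Finset.sum_congr rfl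
    intro d hd
    simp only [Finset.mem_Icc] at hd
    have hsub : Finset.Icc 1 (N - d) ⊆ Finset.Icc 1 (N - 1) := by
      apply Finset.Icc_subset_Icc_right; omega
    rw [show (∑ j ∈ Finset.Icc 1 (N - d), ∏ k ∈ Finset.Icc j (j + d - 1), ρ k)
        = ∑ j ∈ Finset.Icc 1 (N - d), ∏ k ∈ Finset.Icc j (j + d - 1), ρt k from
      Finset.sum_congr rfl fun j hj => by
        simp only [Finset.mem_Icc] at hj
        exact hagree d j hd.1 hj.1 (by omega)]
    rw [sub_eq_iff_eq_add]
    exact (Finset.sum_sdiff hsub).symm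
  have hE_nonneg : ∀ d ∈ Finset.Icc 1 (N - 1),
      0 ≤ ∑ j ∈ Finset.Icc 1 (N - 1) \ Finset.Icc 1 (N - d),
        ∏ k ∈ Finset.Icc j (j + d - 1), ρt k :=
    fun d _ => Finset.sum_nonneg fun j _ => hprod_nonneg d j
  refine ⟨by rw [hdiff]; exact Finset.sum_nonneg hE_nonneg, ?_, htsum⟩
  have hE_le : ∀ d ∈ Finset.Icc 1 (N - 1),
      (∑ j ∈ Finset.Icc 1 (N - 1) \ Finset.Icc 1 (N - d),
        ∏ k ∈ Finset.Icc j (j + d - 1), ρt k) ≤ (d : ℝ) * α ^ d := by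
    intro d hd
    simp only [Finset.mem_Icc] at hd
    have hsub : Finset.Icc 1 (N - d) ⊆ Finset.Icc 1 (N - 1) :=
      Finset.Icc_subset_Icc_right (by omega)
    have hcard : (Finset.Icc 1 (N - 1) \ Finset.Icc 1 (N - d)).card = d - 1 := by
      rw [Finset.card_sdiff_of_subset hsub, Nat.card_Icc, Nat.card_Icc]; omega
    calc (∑ j ∈ Finset.Icc 1 (N - 1) \ Finset.Icc 1 (N - d),
          ∏ k ∈ Finset.Icc j (j + d - 1), ρt k)
        ≤ (Finset.Icc 1 (N - 1) \ Finset.Icc 1 (N - d)).card • (α ^ d) :=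
          Finset.sum_le_card_nsmul _ _ _ (fun j _ => hprod_le d j hd.1)
      _ = ((d : ℝ) - 1) * α ^ d := by
          rw [hcard, nsmul_eq_mul]
          congr 1
          push_cast [Nat.cast_sub hd.1]
          ring
      _ ≤ (d : ℝ) * α ^ d := by
          apply mul_le_mul_of_nonneg_right (by linarith) (pow_nonneg hα0.le d)
  calc St - S ≤ ∑ d ∈ Finset.Icc 1 (N - 1), (d : ℝ) * α ^ d := by
        rw [hdiff]; exact Finset.sum_le_sum hE_le
    _ ≤ ∑' d : ℕ, (d : ℝ) * α ^ d :=
        Summable.sum_le_tsum _ (fun d _ => mul_nonneg (Nat.cast_nonneg d) (pow_nonneg hα0.le d)) hsummable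
    _ = α / (1 - α) ^ 2 := htsum
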